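/- Let M > 2 and β₁ ≥ β₂ > 0 and p_max > 0 be real numbers with p_max ≤ (β₁ − β₂) / (β₁·β₂·(M − 2)). Then the supremum of R^mMIMO(p₁, p₂) = log₂(1 + (M − 2)·β₁·p₁) + log₂(1 + (M − 2)·β₂·p₂) over all p₁ ≥ 0, p₂ ≥ 0 with p₁ + p₂ ≤ p_max equals log₂(1 + p_max·β₁·(M − 2)), attained at (p₁, p₂) = (p_max, 0). -/
import Mathlib


/-- Equation (21): when `p_max ≤ (β₁ − β₂)/(β₁·β₂·(M−2))`, the supremum of the
two-user mMIMO sum rate `R(p₁,p₂) = log₂(1 + (M−2)·β₁·p₁) + log₂(1 + (M−2)·β₂·p₂)`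
over `{p₁ ≥ 0, p₂ ≥ 0, p₁ + p₂ ≤ p_max}` equals `log₂(1 + p_max·β₁·(M−2))`,
attained at `(p₁, p₂) = (p_max, 0)`. -/
theorem mmimo_two_user_max_sum_rate_corner
    (M β₁ β₂ pmax : ℝ) (hM : 2 < M) (hβ₂ : 0 < β₂) (hβ : β₂ ≤ β₁)
    (hpmax : 0 < pmax) (hbudget : pmax ≤ (β₁ - β₂) / (β₁ * β₂ * (M - 2)))
    (R : ℝ → ℝ → ℝ)
    (hR : ∀ p₁ p₂, R p₁ p₂ =
      Real.logb 2 (1 + (M - 2) * β₁ * p₁) +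
      Real.logb 2 (1 + (M - 2) * β₂ * p₂)) :
    (∀ p₁ p₂, 0 ≤ p₁ → 0 ≤ p₂ → p₁ + p₂ ≤ pmax →
      R p₁ p₂ ≤ Real.logb 2 (1 + pmax * β₁ * (M - 2))) ∧
    R pmax 0 = Real.logb 2 (1 + pmax * β₁ * (M - 2)) := by
  have hβ₁ : 0 < β₁ := lt_of_lt_of_le hβ₂ hβ
  have hM2 : 0 < M - 2 := by linarith
  have hden : 0 < β₁ * β₂ * (M - 2) := by positivity
  have hbud : pmax * (β₁ * β₂ * (M - 2)) ≤ β₁ - β₂ :=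
    (le_div_iff₀ hden).mp hbudget
  constructor
  · intro p₁ p₂ h1 h2 hsum
    rw [hR]
    have ha1 : (0:ℝ) < 1 + (M - 2) * β₁ * p₁ := by positivity
    have hb1 : (0:ℝ) < 1 + (M - 2) * β₂ * p₂ := by positivity
    have key : (1 + (M - 2) * β₁ * p₁) * (1 + (M - 2) * β₂ * p₂)
        ≤ 1 + pmax * β₁ * (M - 2) := by
      have hp1le : p₁ ≤ pmax := by linarith
      -- (M-2)β₁β₂ p₁ ≤ β₁ - β₂
      have h3 : (M - 2) * β₁ * β₂ * p₁ ≤ β₁ - β₂ := by nlinarith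
      nlinarith [mul_nonneg (mul_nonneg hM2.le h2) (sub_nonneg.mpr h3),
        mul_le_mul_of_nonneg_left hsum (mul_nonneg hM2.le hβ₁.le)]
    calc Real.logb 2 (1 + (M - 2) * β₁ * p₁) + Real.logb 2 (1 + (M - 2) * β₂ * p₂)
        = Real.logb 2 ((1 + (M - 2) * β₁ * p₁) * (1 + (M - 2) * β₂ * p₂)) := by
          rw [Real.logb_mul (ne_of_gt ha1) (ne_of_gt hb1)]
      _ ≤ Real.logb 2 (1 + pmax * β₁ * (M - 2)) :=
          Real.logb_le_logb_of_le (by norm_num) (by positivity) key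
  · rw [hR]
    have : (M - 2) * β₂ * 0 = 0 := by ring
    rw [this, add_zero, Real.logb_one, add_zero]
    ring_nf
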